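/- arXiv:1412.4487 — 9 statements merged into one kernel-verified Lean document; each statement's English description precedes it below -/
import Mathlib

section
/- Let η be a natural transformation from the identity functor of the category of finite groups to itself; that is, for every finite group G a group homomorphism η_G : G → G is given such that f ∘ η_G = η_H ∘ f for every group homomorphism f : G → H between finite groups. Then either η_G is the identity homomorphism for every finite group G, or η_G is the trivial homomorphism (sending every element to 1) for every finite group G. -/
universe u

section Aux

open Multiplicative DihedralGroup

/-- The homomorphism from `ULift (Multiplicative (ZMod n))` to `H` sending the generator
to an element `h` with `h ^ n = 1`. -/
def powHomAux {H : Type*} [Group H] {n : ℕ} [NeZero n] (h : H) (hh : h ^ n = 1) :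
    ULift.{u} (Multiplicative (ZMod n)) →* H where
  toFun x := h ^ (Multiplicative.toAdd x.down).val
  map_one' := by simp
  map_mul' a b := by
    show h ^ ((Multiplicative.toAdd a.down + Multiplicative.toAdd b.down).val) = _
    rw [ZMod.val_add, ← pow_eq_pow_mod _ hh, pow_add]

theorem powHomAux_apply {H : Type*} [Group H] {n : ℕ} [NeZero n] (h : H) (hh : h ^ n = 1)
    (k : ℕ) : powHomAux.{u} h hh ⟨Multiplicative.ofAdd (k : ZMod n)⟩ = h ^ k := by
  show h ^ ((k : ZMod n).val) = h ^ k
  rw [ZMod.val_natCast, ← pow_eq_pow_mod _ hh]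

theorem center_key
    (η : ∀ (G : Type u) [Group G] [Finite G], G →* G)
    (hη : ∀ (G : Type u) [Group G] [Finite G] (H : Type u) [Group H] [Finite H]
      (f : G →* H), f.comp (η G) = (η H).comp f)
    (k : ℕ) (hk : k = 0 ∨ k = 1)
    (hc : η (ULift.{u} (Multiplicative (ZMod 2)))
        ⟨Multiplicative.ofAdd (1 : ZMod 2)⟩ = ⟨Multiplicative.ofAdd (1 : ZMod 2)⟩ ^ k)
    (G : Type u) [Group G] [Finite G] (g : G) : η G g = g ^ k := by
  have hnat : ∀ (A : Type u) [Group A] [Finite A] (B : Type u) [Group B] [Finite B]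
      (f : A →* B) (a : A), η B (f a) = f (η A a) := by
    intro A _ _ B _ _ f a
    exact (DFunLike.congr_fun (hη A B f) a).symm
  set n := orderOf g with hn
  haveI : NeZero n := ⟨(orderOf_pos g).ne'⟩
  set D := ULift.{u} (DihedralGroup n) with hD
  -- η on order-2 elements of D
  have hsr : ∀ j : ZMod n, η D ⟨sr j⟩ = ⟨sr j⟩ ^ k := by
    intro j
    have h2 : (⟨sr j⟩ : D) ^ 2 = 1 := by
      have : (sr j : DihedralGroup n) ^ 2 = 1 := by
        rw [pow_two, sr_mul_self]
      exact congrArg ULift.up this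
    have := hnat _ _ (powHomAux.{u} (⟨sr j⟩ : D) h2) ⟨Multiplicative.ofAdd (1 : ZMod 2)⟩
    have h1 : (powHomAux.{u} (⟨sr j⟩ : D) h2) ⟨Multiplicative.ofAdd (1 : ZMod 2)⟩
        = ⟨sr j⟩ := by
      have := powHomAux_apply.{u} (⟨sr j⟩ : D) h2 1
      simpa using this
    rw [h1] at this
    rw [this, hc, map_pow, h1]
  -- η on r 1
  have hr1 : η D ⟨r 1⟩ = ⟨r 1⟩ ^ k := by
    have hsplit : (⟨r 1⟩ : D) = ⟨sr 0⟩ * ⟨sr 1⟩ := by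
      have : (sr 0 : DihedralGroup n) * sr 1 = r 1 := by
        rw [sr_mul_sr, sub_zero]
      exact congrArg ULift.up this.symm
    rcases hk with hk | hk <;> subst hk <;>
      simp only [pow_zero, pow_one] at *
    · rw [hsplit, map_mul, hsr 0, hsr 1, mul_one]
    · rw [hsplit, map_mul, hsr 0, hsr 1]
  -- η on the cyclic group of order n
  set Cn := ULift.{u} (Multiplicative (ZMod n)) with hCn
  have hr1n : (⟨r 1⟩ : D) ^ n = 1 := congrArg ULift.up r_one_pow_n
  set ψ : Cn →* D := powHomAux.{u} (⟨r 1⟩ : D) hr1n with hψ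
  have hψinj : Function.Injective ψ := by
    intro x y hxy
    have hx : ∀ z : Cn, ψ z = ⟨r (Multiplicative.toAdd z.down)⟩ := by
      intro z
      show (⟨r 1⟩ : D) ^ ((Multiplicative.toAdd z.down).val) = _
      have : (r 1 : DihedralGroup n) ^ ((Multiplicative.toAdd z.down).val)
          = r (Multiplicative.toAdd z.down) := by
        rw [r_one_pow, ZMod.natCast_rightInverse _]
      exact congrArg ULift.up this
    rw [hx x, hx y] at hxy
    have := congrArg ULift.down hxy
    simp only [r.injEq] at this
    apply ULift.ext
    exact Multiplicative.toAdd.injective this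
  have hgen : η Cn ⟨Multiplicative.ofAdd (1 : ZMod n)⟩
      = ⟨Multiplicative.ofAdd (1 : ZMod n)⟩ ^ k := by
    apply hψinj
    have := hnat _ _ ψ ⟨Multiplicative.ofAdd (1 : ZMod n)⟩
    have h1 : ψ ⟨Multiplicative.ofAdd (1 : ZMod n)⟩ = ⟨r 1⟩ := by
      have := powHomAux_apply.{u} (⟨r 1⟩ : D) hr1n 1
      simpa using this
    rw [h1, hr1] at this
    rw [map_pow, h1, this]
  -- conclude for g
  have hgn : g ^ n = 1 := pow_orderOf_eq_one g
  set χ : Cn →* G := powHomAux.{u} g hgn with hχ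
  have hχ1 : χ ⟨Multiplicative.ofAdd (1 : ZMod n)⟩ = g := by
    have := powHomAux_apply.{u} g hgn 1
    simpa using this
  have := hnat _ _ χ ⟨Multiplicative.ofAdd (1 : ZMod n)⟩
  rw [hχ1, hgen, map_pow, hχ1] at this
  exact this

end Aux

/-- A natural transformation from the identity functor of the category of
finite groups to itself is either the identity everywhere or trivial everywhere. -/
theorem center_of_category_of_finite_groups
    (η : ∀ (G : Type u) [Group G] [Finite G], G →* G)
    (hη : ∀ (G : Type u) [Group G] [Finite G] (H : Type u) [Group H] [Finite H]
      (f : G →* H), f.comp (η G) = (η H).comp f) :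
    (∀ (G : Type u) [Group G] [Finite G], η G = MonoidHom.id G) ∨
    (∀ (G : Type u) [Group G] [Finite G] (g : G), η G g = 1) := by
  set c := η (ULift.{u} (Multiplicative (ZMod 2))) ⟨Multiplicative.ofAdd (1 : ZMod 2)⟩ with hc
  have hcases : ∀ x : ULift.{u} (Multiplicative (ZMod 2)),
      x = ⟨Multiplicative.ofAdd (1 : ZMod 2)⟩ ^ 1 ∨
      x = ⟨Multiplicative.ofAdd (1 : ZMod 2)⟩ ^ 0 := by decide
  rcases hcases c with h | h
  · left
    intro G _ _
    ext g
    simpa using center_key η hη 1 (Or.inr rfl) (hc ▸ h) G g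
  · right
    intro G _ _ g
    simpa using center_key η hη 0 (Or.inl rfl) (hc ▸ h) G g
end

section
/- Let m and n be natural numbers with m ≥ 5 and 2 ≤ n ≤ m. Then the subgroup of the symmetric group Equiv.Perm (Fin m) generated by the set of elements of order n is equal either to the alternating group on Fin m or to the whole symmetric group. -/
/-- For `m ≥ 5` and `2 ≤ n ≤ m`, the subgroup of the symmetric group on
`m` letters generated by the elements of order `n` is the alternating group or the
full symmetric group. -/
theorem closure_of_elements_of_order_n
    (m n : ℕ) (hm : 5 ≤ m) (hn : 2 ≤ n) (hnm : n ≤ m) :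
    Subgroup.closure {g : Equiv.Perm (Fin m) | orderOf g = n} = alternatingGroup (Fin m) ∨
    Subgroup.closure {g : Equiv.Perm (Fin m) | orderOf g = n} = ⊤ := by
  obtain ⟨M, rfl⟩ : ∃ M, m = M + 1 := ⟨m - 1, by omega⟩
  set S : Set (Equiv.Perm (Fin (M + 1))) := {g | orderOf g = n} with hS
  set H : Subgroup (Equiv.Perm (Fin (M + 1))) := Subgroup.closure S with hHdef
  -- the generating set is invariant under conjugation
  have hconj : ∀ x g : Equiv.Perm (Fin (M + 1)), g ∈ S → x * g * x⁻¹ ∈ S := by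
    intro x g hg
    have : SemiconjBy x g (x * g * x⁻¹) := by
      unfold SemiconjBy; group
    simpa [hS, ← this.orderOf_eq x] using hg
  -- H is normal
  have hNorm : H.Normal := by
    have h1 : Group.conjugatesOfSet S = S := by
      apply le_antisymm
      · intro x hx
        rw [Group.mem_conjugatesOfSet_iff] at hx
        obtain ⟨a, ha, hc⟩ := hx
        obtain ⟨c, hc⟩ := isConj_iff.mp hc
        exact hc ▸ hconj c a ha
      · exact Group.subset_conjugatesOfSet
    have h2 : Subgroup.normalClosure S = H := by
      rw [Subgroup.normalClosure, h1]
    rw [← h2]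
    infer_instance
  haveI := hNorm
  by_cases h2 : n = 2
  · -- all swaps have order 2, so the closure is everything
    right
    rw [eq_top_iff, ← Equiv.Perm.closure_isSwap]
    apply Subgroup.closure_le _ |>.mpr
    intro g hg
    obtain ⟨x, y, hxy, rfl⟩ := hg
    apply Subgroup.subset_closure
    subst h2
    rw [hS, Set.mem_setOf_eq]
    refine orderOf_eq_prime ?_ ?_
    · rw [pow_two, Equiv.swap_mul_self]
    · simpa [ne_eq, Equiv.swap_eq_one_iff] using hxy
  · -- n ≥ 3 : produce a 3-cycle in H
    have hn3 : 3 ≤ n := by omega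
    set i : Fin (M + 1) := ⟨n - 1, by omega⟩ with hi
    set c : Equiv.Perm (Fin (M + 1)) := Fin.cycleRange i with hc
    have hi0 : i ≠ 0 := by
      simp [hi, Fin.ext_iff]; omega
    have hcS : c ∈ S := by
      rw [hS, Set.mem_setOf_eq, ← Equiv.Perm.lcm_cycleType, hc,
        Fin.cycleType_cycleRange hi0, Multiset.lcm_singleton, normalize_eq]
      simp [hi]; omega
    have hM4 : 4 ≤ M := by omega
    have h01 : ((0 : Fin (M + 1)) : ℕ) = 0 := rfl
    have hlt1 : (0 : Fin (M + 1)) < i := by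
      rw [Fin.lt_def]; simp [hi]; omega
    have hlt2 : (1 : Fin (M + 1)) < i := by
      rw [Fin.lt_def]
      have : ((1 : Fin (M + 1)) : ℕ) = 1 := by
        simp [Fin.val_one, Nat.mod_eq_of_lt]; omega
      rw [this]; simp [hi]; omega
    have hc0 : c 0 = 1 := by
      rw [hc, Fin.cycleRange_of_lt hlt1, zero_add]
    have hc1 : c 1 = 2 := by
      rw [hc, Fin.cycleRange_of_lt hlt2]
      norm_num
      rw [Fin.ext_iff, Fin.val_add]; show (1 % (M+1) + 1 % (M+1)) % (M+1) = 2 % (M+1)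
      rw [Nat.mod_eq_of_lt (by omega : 1 < M+1), Nat.mod_eq_of_lt (by omega : 2 < M+1)]
    -- distinctness of 0, 1, 2 in Fin (M+1)
    have e0 : ((0 : Fin (M + 1)) : ℕ) = 0 := rfl
    have e1 : ((1 : Fin (M + 1)) : ℕ) = 1 := by
      simp [Fin.val_one, Nat.mod_eq_of_lt]; omega
    have e2 : ((2 : Fin (M + 1)) : ℕ) = 2 := by
      have h2lt : 2 < M + 1 := by omega
      show 2 % (M+1) = 2; exact Nat.mod_eq_of_lt h2lt
    have h01' : (0 : Fin (M + 1)) ≠ 1 := by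
      intro h; apply_fun (Fin.val) at h; rw [e0, e1] at h; omega
    have h02' : (0 : Fin (M + 1)) ≠ 2 := by
      intro h; apply_fun (Fin.val) at h; rw [e0, e2] at h; omega
    have h12' : (1 : Fin (M + 1)) ≠ 2 := by
      intro h; apply_fun (Fin.val) at h; rw [e1, e2] at h; omega
    set s : Equiv.Perm (Fin (M + 1)) := Equiv.swap 0 1 with hs
    -- the element c * (s c s⁻¹)⁻¹ is a 3-cycle lying in H
    have hd : s * c * s⁻¹ ∈ S := hconj s c hcS
    have hmemH : c * (s * c * s⁻¹)⁻¹ ∈ H :=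
      mul_mem (Subgroup.subset_closure hcS)
        (inv_mem (Subgroup.subset_closure hd))
    have hcalc : c * (s * c * s⁻¹)⁻¹ = Equiv.swap (c 0) (c 1) * s := by
      rw [Equiv.swap_apply_apply]
      simp [hs, mul_assoc, Equiv.swap_inv]
    have hthree : Equiv.Perm.IsThreeCycle (c * (s * c * s⁻¹)⁻¹) := by
      rw [hcalc, hc0, hc1, hs, Equiv.swap_comm 0 1]
      exact Equiv.Perm.isThreeCycle_swap_mul_swap_same h12' h01'.symm h02'.symm
    -- a normal subgroup containing a 3-cycle contains the alternating group
    set f := c * (s * c * s⁻¹)⁻¹ with hf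
    have hcard : 5 ≤ Nat.card (Fin (M + 1)) := by simpa using hm
    have hA : alternatingGroup (Fin (M + 1)) ≤ H := by
      haveI : (H.subgroupOf (alternatingGroup (Fin (M + 1)))).Normal :=
        hNorm.subgroupOf _
      have hfA : (⟨f, hthree.mem_alternatingGroup⟩ : alternatingGroup (Fin (M + 1))) ∈
          H.subgroupOf (alternatingGroup (Fin (M + 1))) := by
        rw [Subgroup.mem_subgroupOf]; exact hmemH
      have := Subgroup.normalClosure_le_normal
        (N := H.subgroupOf (alternatingGroup (Fin (M + 1))))
        (Set.singleton_subset_iff.mpr hfA)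
      rw [hthree.alternating_normalClosure hcard] at this
      rw [← Subgroup.subgroupOf_eq_top]
      exact le_antisymm le_top this
    -- dichotomy: H ≤ A or not
    by_cases hHA : H ≤ alternatingGroup (Fin (M + 1))
    · left; exact le_antisymm hHA hA
    · right
      rw [eq_top_iff]
      intro h _
      obtain ⟨g, hgH, hgA⟩ := SetLike.not_le_iff_exists.mp hHA
      by_cases hh : h ∈ alternatingGroup (Fin (M + 1))
      · exact hA hh
      · rw [Equiv.Perm.mem_alternatingGroup] at hgA hh
        have hg' : Equiv.Perm.sign g = -1 := Int.units_ne_iff_eq_neg.mp hgA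
        have hh' : Equiv.Perm.sign h = -1 := Int.units_ne_iff_eq_neg.mp hh
        have : g⁻¹ * h ∈ alternatingGroup (Fin (M + 1)) := by
          rw [Equiv.Perm.mem_alternatingGroup, map_mul, map_inv, hg', hh']
          decide
        have : g⁻¹ * h ∈ H := hA this
        simpa using mul_mem hgH this
end

section
/- Let m and n be natural numbers with m ≥ 5 and 2 ≤ n ≤ m, and let G be the subgroup of the symmetric group Equiv.Perm (Fin m) generated by the set of elements of order n. Then there is no group homomorphism α : G → G such that α(g) is conjugate in G to g^n for every g ∈ G. -/
set_option maxHeartbeats 1000000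

open Equiv Equiv.Perm Subgroup

/-- Auxiliary: the subgroup generated by order-`n` elements contains an element whose
`n`-th power is not `1`. -/
lemma aux_exists_elt (m n : ℕ) (hm : 5 ≤ m) (hn : 2 ≤ n) (hnm : n ≤ m) :
    ∃ g ∈ Subgroup.closure {g : Equiv.Perm (Fin m) | orderOf g = n}, g ^ n ≠ 1 := by
  have horder : ∀ a x : Equiv.Perm (Fin m), orderOf (a * x * a⁻¹) = orderOf x := by
    intro a x
    exact (SemiconjBy.orderOf_eq a (show a * x = (a * x * a⁻¹) * a by group)).symm
  have hnormal : (Subgroup.closure {g : Equiv.Perm (Fin m) | orderOf g = n}).Normal := by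
    constructor
    intro x hx g
    induction hx using Subgroup.closure_induction with
    | mem y hy =>
        refine subset_closure ?_
        simp only [Set.mem_setOf_eq] at hy ⊢
        rw [horder, hy]
    | one => simpa using one_mem _
    | mul x y hx hy px py =>
        have h : g * (x * y) * g⁻¹ = (g * x * g⁻¹) * (g * y * g⁻¹) := by group
        rw [h]; exact mul_mem px py
    | inv x hx px =>
        have h : g * x⁻¹ * g⁻¹ = (g * x * g⁻¹)⁻¹ := by group
        rw [h]; exact inv_mem px
  -- a three-cycle in the closure
  obtain ⟨t, ht, htG⟩ : ∃ t : Equiv.Perm (Fin m),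
      IsThreeCycle t ∧ t ∈ Subgroup.closure {g : Equiv.Perm (Fin m) | orderOf g = n} := by
    rcases eq_or_lt_of_le hn with h2 | h3
    · -- n = 2
      subst h2
      have h01 : (⟨0, by omega⟩ : Fin m) ≠ ⟨1, by omega⟩ := by simp
      have h12 : (⟨1, by omega⟩ : Fin m) ≠ ⟨2, by omega⟩ := by simp
      have h02 : (⟨0, by omega⟩ : Fin m) ≠ ⟨2, by omega⟩ := by simp
      have hswap : ∀ a b : Fin m, a ≠ b →
          Equiv.swap a b ∈ {g : Equiv.Perm (Fin m) | orderOf g = 2} := by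
        intro a b hab
        simp only [Set.mem_setOf_eq]
        exact orderOf_eq_prime (Equiv.swap_mul_self a b) (fun h => hab (Equiv.swap_eq_one_iff.1 h))
      refine ⟨Equiv.swap ⟨1, by omega⟩ ⟨0, by omega⟩ * Equiv.swap ⟨1, by omega⟩ ⟨2, by omega⟩,
        isThreeCycle_swap_mul_swap_same h01.symm h12 h02, ?_⟩
      exact mul_mem (subset_closure (hswap _ _ h01.symm)) (subset_closure (hswap _ _ h12))
    · -- 3 ≤ n
      obtain ⟨k, rfl⟩ : ∃ k, n = k + 1 := ⟨n - 1, by omega⟩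
      have hk : 2 ≤ k := by omega
      have h0 : (0 : ℕ) < k + 1 := by omega
      have h1 : (1 : ℕ) < k + 1 := by omega
      have h2 : (2 : ℕ) < k + 1 := by omega
      obtain ⟨ι, -⟩ : ∃ ι : Fin (k + 1) ↪ Fin m, True := ⟨Fin.castLEEmb hnm, trivial⟩
      obtain ⟨c, hcdef⟩ : ∃ c : Equiv.Perm (Fin m),
          c = Equiv.Perm.viaEmbeddingHom ι (finRotate (k + 1)) := ⟨_, rfl⟩
      have hcn : orderOf c = k + 1 := by
        rw [hcdef, orderOf_injective _ (Equiv.Perm.viaEmbeddingHom_injective ι),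
          (isCycle_finRotate_of_le (by omega)).orderOf, support_finRotate_of_le (by omega)]
        simp
      have hι : ∀ i : Fin (k + 1), c (ι i) = ι (finRotate (k + 1) i) := by
        intro i
        rw [hcdef]
        exact Equiv.Perm.viaEmbedding_apply (finRotate (k + 1)) ι i
      have hf0 : finRotate (k + 1) ⟨0, h0⟩ = ⟨1, h1⟩ := by
        ext
        rw [finRotate_succ_apply, Fin.val_add, Fin.val_one',
          Nat.mod_eq_of_lt (show (1 : ℕ) < k + 1 by omega)]
        show (0 + 1) % (k + 1) = 1
        rw [Nat.mod_eq_of_lt (show 0 + 1 < k + 1 by omega)]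
      have hf1 : finRotate (k + 1) ⟨1, h1⟩ = ⟨2, h2⟩ := by
        ext
        rw [finRotate_succ_apply, Fin.val_add, Fin.val_one',
          Nat.mod_eq_of_lt (show (1 : ℕ) < k + 1 by omega)]
        show (1 + 1) % (k + 1) = 2
        rw [Nat.mod_eq_of_lt (show 1 + 1 < k + 1 by omega)]
      have hca : c (ι ⟨0, h0⟩) = ι ⟨1, h1⟩ := by rw [hι, hf0]
      have hcb : c (ι ⟨1, h1⟩) = ι ⟨2, h2⟩ := by rw [hι, hf1]
      have hab : ι ⟨0, h0⟩ ≠ ι ⟨1, h1⟩ := fun h => by have := ι.injective h; simp [Fin.ext_iff] at this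
      have hbd : ι ⟨1, h1⟩ ≠ ι ⟨2, h2⟩ := fun h => by have := ι.injective h; simp [Fin.ext_iff] at this
      have had : ι ⟨0, h0⟩ ≠ ι ⟨2, h2⟩ := fun h => by have := ι.injective h; simp [Fin.ext_iff] at this
      refine ⟨c * (Equiv.swap (ι ⟨0, h0⟩) (ι ⟨1, h1⟩) * c⁻¹ *
          (Equiv.swap (ι ⟨0, h0⟩) (ι ⟨1, h1⟩))⁻¹), ?_, ?_⟩
      · have h1' : Equiv.swap (c (ι ⟨0, h0⟩)) (c (ι ⟨1, h1⟩))
            = c * Equiv.swap (ι ⟨0, h0⟩) (ι ⟨1, h1⟩) * c⁻¹ :=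
          Equiv.swap_apply_apply c (ι ⟨0, h0⟩) (ι ⟨1, h1⟩)
        rw [hca, hcb] at h1'
        have heq : c * (Equiv.swap (ι ⟨0, h0⟩) (ι ⟨1, h1⟩) * c⁻¹ *
            (Equiv.swap (ι ⟨0, h0⟩) (ι ⟨1, h1⟩))⁻¹)
            = Equiv.swap (ι ⟨1, h1⟩) (ι ⟨2, h2⟩) * Equiv.swap (ι ⟨1, h1⟩) (ι ⟨0, h0⟩) := by
          rw [Equiv.swap_inv, show c * (Equiv.swap (ι ⟨0, h0⟩) (ι ⟨1, h1⟩) * c⁻¹ *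
              Equiv.swap (ι ⟨0, h0⟩) (ι ⟨1, h1⟩))
              = (c * Equiv.swap (ι ⟨0, h0⟩) (ι ⟨1, h1⟩) * c⁻¹) *
                Equiv.swap (ι ⟨0, h0⟩) (ι ⟨1, h1⟩) by group,
            ← h1', Equiv.swap_comm (ι ⟨0, h0⟩) (ι ⟨1, h1⟩)]
        rw [heq]
        exact isThreeCycle_swap_mul_swap_same hbd (fun h => hab h.symm) (fun h => had h.symm)
      · refine mul_mem (subset_closure hcn) (subset_closure ?_)
        simp only [Set.mem_setOf_eq]
        rw [horder, orderOf_inv, hcn]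
  -- all three-cycles lie in the closure, hence so does the alternating group
  have h3 : ∀ t' : Equiv.Perm (Fin m), IsThreeCycle t' →
      t' ∈ Subgroup.closure {g : Equiv.Perm (Fin m) | orderOf g = n} := by
    intro t' ht'
    have hconj : IsConj t t' := isConj_iff_cycleType_eq.2 (ht.cycleType.trans ht'.cycleType.symm)
    obtain ⟨z, hz⟩ := isConj_iff.1 hconj
    rw [← hz]
    exact hnormal.conj_mem t htG z
  have hAle : alternatingGroup (Fin m) ≤
      Subgroup.closure {g : Equiv.Perm (Fin m) | orderOf g = n} := by
    rw [← Equiv.Perm.closure_three_cycles_eq_alternating]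
    exact (Subgroup.closure_le _).2 h3
  -- pick a prime p not dividing n but dividing the order of the alternating group
  obtain ⟨p, hp, hpn, hpA⟩ : ∃ p : ℕ, p.Prime ∧ ¬ p ∣ n ∧
      p ∣ Fintype.card (alternatingGroup (Fin m)) := by
    haveI : Nontrivial (Fin m) := ⟨⟨⟨0, by omega⟩, ⟨1, by omega⟩, by simp⟩⟩
    have hcard : 2 * Fintype.card (alternatingGroup (Fin m)) = Nat.factorial m := by
      rw [two_mul_card_alternatingGroup, Fintype.card_perm, Fintype.card_fin]
    rcases Nat.even_or_odd n with he | ho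
    · obtain ⟨p, hp, hlt, hle⟩ := Nat.exists_prime_lt_and_le_two_mul (m / 2) (by omega)
      have hpm : p ≤ m := le_trans hle (by omega)
      have hp2 : 2 < p := by omega
      refine ⟨p, hp, ?_, ?_⟩
      · rintro ⟨j, rfl⟩
        rcases Nat.lt_or_ge j 2 with hj | hj
        · interval_cases j
          · omega
          · -- p * 1 = p even, but p > 2 prime
            rw [mul_one] at he
            rw [Nat.Prime.even_iff hp] at he
            omega
        · have : p * 2 ≤ p * j := Nat.mul_le_mul_left p hj
          omega
      · have h4 : p ∣ Nat.factorial m := Nat.dvd_factorial hp.pos hpm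
        rw [← hcard] at h4
        rcases (Nat.Prime.dvd_mul hp).mp h4 with h | h
        · exact absurd (Nat.le_of_dvd (by omega) h) (by omega)
        · exact h
    · refine ⟨2, Nat.prime_two, ?_, ?_⟩
      · rw [Nat.odd_iff] at ho
        omega
      · have h4 : (4 : ℕ) ∣ Nat.factorial m := Nat.dvd_factorial (by omega) (by omega)
        rw [← hcard] at h4
        omega
  haveI := Fact.mk hp
  obtain ⟨g, hg⟩ := exists_prime_orderOf_dvd_card p hpA
  refine ⟨(g : Equiv.Perm (Fin m)), hAle g.2, ?_⟩
  intro hgn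
  have hdvd : orderOf (g : Equiv.Perm (Fin m)) ∣ n := orderOf_dvd_of_pow_eq_one hgn
  have hco : orderOf (g : Equiv.Perm (Fin m)) = p := by
    rw [← hg]
    exact orderOf_injective (alternatingGroup (Fin m)).subtype Subtype.coe_injective g
  rw [hco] at hdvd
  exact hpn hdvd

/-- For `m ≥ 5` and `2 ≤ n ≤ m`, the subgroup of the symmetric group on `m`
letters generated by the elements of order `n` admits no endomorphism of conjugacy
type `n`. -/
theorem no_endomorphism_of_conjugacy_type_n
    (m n : ℕ) (hm : 5 ≤ m) (hn : 2 ≤ n) (hnm : n ≤ m) :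
    ¬ ∃ α : (Subgroup.closure {g : Equiv.Perm (Fin m) | orderOf g = n}) →*
        (Subgroup.closure {g : Equiv.Perm (Fin m) | orderOf g = n}),
      ∀ g, IsConj (α g) (g ^ n) := by
  rintro ⟨α, hα⟩
  -- α kills every generator, hence is trivial
  have htriv : ∀ x (hx : x ∈ Subgroup.closure {g : Equiv.Perm (Fin m) | orderOf g = n}),
      α ⟨x, hx⟩ = 1 := by
    intro x hx
    induction hx using Subgroup.closure_induction with
    | mem y hy =>
        have hy' : orderOf y = n := hy
        have hyn : (⟨y, subset_closure hy⟩ :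
            Subgroup.closure {g : Equiv.Perm (Fin m) | orderOf g = n}) ^ n = 1 := by
          apply Subtype.ext
          rw [SubmonoidClass.coe_pow]
          show y ^ n = (1 : Equiv.Perm (Fin m))
          rw [← hy']
          exact pow_orderOf_eq_one y
        have hc := hα ⟨y, subset_closure hy⟩
        rw [hyn] at hc
        obtain ⟨c, hc⟩ := isConj_iff.1 hc
        have h2 : α ⟨y, subset_closure hy⟩ = c⁻¹ * 1 * c := by
          rw [← hc]; group
        rw [h2]; group
    | one =>
        have h1 : (⟨1, one_mem _⟩ :
            Subgroup.closure {g : Equiv.Perm (Fin m) | orderOf g = n}) = 1 := rfl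
        rw [h1, map_one]
    | mul x y hx hy px py =>
        have h : (⟨x * y, mul_mem hx hy⟩ :
            Subgroup.closure {g : Equiv.Perm (Fin m) | orderOf g = n}) = ⟨x, hx⟩ * ⟨y, hy⟩ := rfl
        rw [h, map_mul, px, py, one_mul]
    | inv x hx px =>
        have h : (⟨x⁻¹, inv_mem hx⟩ :
            Subgroup.closure {g : Equiv.Perm (Fin m) | orderOf g = n}) = (⟨x, hx⟩)⁻¹ := rfl
        rw [h, map_inv, px, inv_one]
  have key : ∀ g : (Subgroup.closure {g : Equiv.Perm (Fin m) | orderOf g = n}), g ^ n = 1 := by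
    intro g
    have hc := hα g
    rw [htriv g.1 g.2] at hc
    obtain ⟨c, hc⟩ := isConj_iff.1 hc
    have h1 : c * 1 * c⁻¹ = 1 := by group
    rw [h1] at hc
    exact hc.symm
  obtain ⟨g, hgG, hgn⟩ := aux_exists_elt m n hm hn hnm
  apply hgn
  have := key ⟨g, hgG⟩
  have h2 := congrArg Subtype.val this
  rw [SubmonoidClass.coe_pow] at h2
  exact h2
end

section
/- Fix a universe u. Suppose that for every pair of finite groups G, H in u and every group homomorphism α : G → H an element Q(α) ∈ H is given such that: (i) Q(α) lies in the center of the centralizer in H of the range of α (that is, Q(α) commutes with α(g) for all g ∈ G and with every element of H that commutes with all α(g)); and (ii) for all finite groups G, H, K and homomorphisms β : G → H, γ : H → K one has Q(γ ∘ β) = Q(γ) · γ(Q(β)). Then there exists a family assigning to each finite group F an element P(F) of the center of F such that Q(α) = P(H) · (α(P(G)))⁻¹ for every homomorphism α : G → H between finite groups. -/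
universe u

/-- Vanishing of `E₂^{1,1}` for the 2-category of finite groups: every
1-cocycle `Q` assigning to each homomorphism `α : G → H` of finite groups an element of
the center of the centralizer of the range of `α`, satisfying
`Q(γ ∘ β) = Q(γ) · γ(Q(β))`, is a coboundary. -/
theorem cocycle_on_finite_groups_is_coboundary
    (Q : ∀ (G : Type u) [Group G] [Finite G] (H : Type u) [Group H] [Finite H],
      (G →* H) → H)
    (hQ1 : ∀ (G : Type u) [Group G] [Finite G] (H : Type u) [Group H] [Finite H]
      (α : G →* H),
      Q G H α ∈ Subgroup.centralizer (Set.range α) ∧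
        ∀ h ∈ Subgroup.centralizer (Set.range α), Q G H α * h = h * Q G H α)
    (hQ2 : ∀ (G : Type u) [Group G] [Finite G] (H : Type u) [Group H] [Finite H]
      (K : Type u) [Group K] [Finite K] (β : G →* H) (γ : H →* K),
      Q G K (γ.comp β) = Q H K γ * γ (Q G H β)) :
    ∃ P : ∀ (F : Type u) [Group F] [Finite F], F,
      (∀ (F : Type u) [Group F] [Finite F], P F ∈ Subgroup.center F) ∧
      ∀ (G : Type u) [Group G] [Finite G] (H : Type u) [Group H] [Finite H]
        (α : G →* H), Q G H α = P H * (α (P G))⁻¹ := by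
  refine ⟨fun F _ _ => Q PUnit.{u+1} F 1, ?_, ?_⟩
  · intro F _ _
    rw [Subgroup.mem_center_iff]
    intro g
    refine ((hQ1 PUnit.{u+1} F 1).2 g ?_).symm
    rw [Subgroup.mem_centralizer_iff]
    rintro x ⟨y, rfl⟩
    simp
  · intro G _ _ H _ _ α
    have h := hQ2 PUnit.{u+1} G H 1 α
    have he : α.comp (1 : PUnit.{u+1} →* G) = 1 := by ext x; simp
    rw [he] at h
    show Q G H α = Q PUnit.{u+1} H 1 * (α (Q PUnit.{u+1} G 1))⁻¹
    rw [h, mul_inv_cancel_right]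
end

section
/- Fix a universe u containing the ring of integers (e.g. via ULift). Suppose that for every pair of rings A, B in u a unit z(A,B) of the center of the ring B ⊗[ℤ] Aᵐᵒᵖ is given, and that for all rings A, B, C in u the following cocycle condition holds: the ℤ-linear map Φ : (C ⊗[ℤ] Bᵐᵒᵖ) ⊗[ℤ] (B ⊗[ℤ] Aᵐᵒᵖ) → C ⊗[ℤ] B ⊗[ℤ] Aᵐᵒᵖ induced by c ⊗ b' ⊗ b ⊗ a ↦ c ⊗ (unop(b')·b) ⊗ a sends z(B,C) ⊗ z(A,B) to the image of z(A,C) under the map C ⊗[ℤ] Aᵐᵒᵖ → C ⊗[ℤ] B ⊗[ℤ] Aᵐᵒᵖ, c ⊗ a ↦ c ⊗ 1 ⊗ a. Then there exists, for every ring A in u, a unit w(A) of the center of A such that z(A,B) = (w(B) ⊗ 1) · (1 ⊗ op(w(A))⁻¹) in B ⊗[ℤ] Aᵐᵒᵖ for all rings A, B in u. -/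
open scoped TensorProduct

universe u

set_option synthInstance.maxHeartbeats 400000
set_option maxHeartbeats 1000000

/-- The `ℤ`-linear map `Bᵐᵒᵖ ⊗[ℤ] B →ₗ[ℤ] B` given by `b' ⊗ b ↦ unop b' * b`. -/
noncomputable def opMulMap (B : Type u) [Ring B] : Bᵐᵒᵖ ⊗[ℤ] B →ₗ[ℤ] B :=
  (LinearMap.mul' ℤ B).comp
    (TensorProduct.map (MulOpposite.opLinearEquiv ℤ).symm.toLinearMap LinearMap.id)

/-- The `ℤ`-linear map `(C ⊗[ℤ] Bᵐᵒᵖ) ⊗[ℤ] (B ⊗[ℤ] Aᵐᵒᵖ) →ₗ[ℤ] C ⊗[ℤ] B ⊗[ℤ] Aᵐᵒᵖ`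
induced by `c ⊗ b' ⊗ b ⊗ a ↦ c ⊗ (unop b' * b) ⊗ a`. -/
noncomputable def cocyclePairing (A B C : Type u) [Ring A] [Ring B] [Ring C] :
    (C ⊗[ℤ] Bᵐᵒᵖ) ⊗[ℤ] (B ⊗[ℤ] Aᵐᵒᵖ) →ₗ[ℤ] C ⊗[ℤ] (B ⊗[ℤ] Aᵐᵒᵖ) :=
  (TensorProduct.map LinearMap.id
      ((TensorProduct.map (opMulMap B) LinearMap.id).comp
        (TensorProduct.assoc ℤ Bᵐᵒᵖ B Aᵐᵒᵖ).symm.toLinearMap)).comp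
    (TensorProduct.assoc ℤ C Bᵐᵒᵖ (B ⊗[ℤ] Aᵐᵒᵖ)).toLinearMap

/-- The `ℤ`-linear map `C ⊗[ℤ] Aᵐᵒᵖ →ₗ[ℤ] C ⊗[ℤ] B ⊗[ℤ] Aᵐᵒᵖ`, `c ⊗ a ↦ c ⊗ 1 ⊗ a`. -/
noncomputable def unitInsertion (A B C : Type u) [Ring A] [Ring B] [Ring C] :
    C ⊗[ℤ] Aᵐᵒᵖ →ₗ[ℤ] C ⊗[ℤ] (B ⊗[ℤ] Aᵐᵒᵖ) :=
  TensorProduct.map LinearMap.id (TensorProduct.mk ℤ B Aᵐᵒᵖ 1)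

section CocycleAux

open TensorProduct MulOpposite

/-- The integers, lifted to universe `u`. -/
abbrev IZ : Type u := ULift.{u} ℤ

noncomputable def eI : IZ.{u} ≃ₐ[ℤ] ℤ :=
  AlgEquiv.ofRingEquiv (f := ULift.ringEquiv) (fun n => by
    simp [algebraMap_int_eq])

@[simp] lemma eI_apply (s : IZ.{u}) : eI s = s.down := rfl

noncomputable def eIop : (IZ.{u})ᵐᵒᵖ ≃ₐ[ℤ] ℤ :=
  ((AlgEquiv.toOpposite ℤ IZ.{u}).symm).trans eI

/-- collapse `B ⊗ IZᵐᵒᵖ ≃ B`. -/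
noncomputable def rcol (B : Type u) [Ring B] : B ⊗[ℤ] (IZ.{u})ᵐᵒᵖ ≃ₐ[ℤ] B :=
  (Algebra.TensorProduct.congr AlgEquiv.refl eIop).trans
    (Algebra.TensorProduct.rid ℤ ℤ B)

/-- collapse `IZ ⊗ X ≃ X`. -/
noncomputable def lcol (X : Type u) [Ring X] : IZ.{u} ⊗[ℤ] X ≃ₐ[ℤ] X :=
  (Algebra.TensorProduct.congr eI AlgEquiv.refl).trans
    (Algebra.TensorProduct.lid ℤ X)

@[simp] lemma rcol_tmul (B : Type u) [Ring B] (b : B) (t : (IZ.{u})ᵐᵒᵖ) :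
    rcol B (b ⊗ₜ[ℤ] t) = (unop t).down • b := by
  simp [rcol, eIop, eI, Algebra.TensorProduct.rid_tmul]
  rfl

@[simp] lemma lcol_tmul (X : Type u) [Ring X] (s : IZ.{u}) (x : X) :
    lcol X (s ⊗ₜ[ℤ] x) = s.down • x := by
  simp [lcol, eI, Algebra.TensorProduct.lid_tmul]
  rfl

noncomputable def gz : IZ.{u} ⊗[ℤ] (IZ.{u})ᵐᵒᵖ ≃ₐ[ℤ] ℤ := (rcol IZ.{u}).trans eI

variable (A B : Type u) [Ring A] [Ring B]

lemma unitInsertion_tmul (C : Type u) [Ring C] (c : C) (a : Aᵐᵒᵖ) :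
    unitInsertion A B C (c ⊗ₜ[ℤ] a) = c ⊗ₜ[ℤ] ((1 : B) ⊗ₜ[ℤ] a) := rfl
lemma P1_insertion :
    (TensorProduct.map LinearMap.id (lcol Aᵐᵒᵖ).toLinearMap) ∘ₗ unitInsertion A IZ.{u} B
      = LinearMap.id := by
  apply TensorProduct.ext'
  intro b a
  show b ⊗ₜ[ℤ] (lcol Aᵐᵒᵖ ((1 : IZ.{u}) ⊗ₜ[ℤ] a)) = b ⊗ₜ[ℤ] a
  simp
lemma P1_pairing :
    (TensorProduct.map LinearMap.id (lcol Aᵐᵒᵖ).toLinearMap) ∘ₗ cocyclePairing A IZ.{u} B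
      = TensorProduct.map (rcol B).toLinearMap (lcol Aᵐᵒᵖ).toLinearMap := by
  apply TensorProduct.ext_fourfold'
  intro b t s a
  show b ⊗ₜ[ℤ] (lcol Aᵐᵒᵖ ((unop t * s) ⊗ₜ[ℤ] a)) = (rcol B (b ⊗ₜ[ℤ] t)) ⊗ₜ[ℤ] (lcol Aᵐᵒᵖ (s ⊗ₜ[ℤ] a))
  rw [lcol_tmul, lcol_tmul, rcol_tmul, ULift.mul_down, mul_smul, smul_tmul]
noncomputable def lcolLin (X : Type u) [Ring X] : IZ.{u} ⊗[ℤ] X →ₗ[ℤ] X := (lcol X).toLinearMap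

lemma lcolLin_tmul (X : Type u) [Ring X] (s : IZ.{u}) (x : X) :
    lcolLin X (s ⊗ₜ[ℤ] x) = s.down • x := lcol_tmul X s x

noncomputable def P2 : IZ.{u} ⊗[ℤ] (A ⊗[ℤ] (IZ.{u})ᵐᵒᵖ) →ₗ[ℤ] A :=
  (rcol A).toLinearMap ∘ₗ lcolLin (A ⊗[ℤ] (IZ.{u})ᵐᵒᵖ)
lemma P2_insertion :
    P2 A ∘ₗ unitInsertion IZ.{u} A IZ.{u}
      = (Algebra.linearMap ℤ A) ∘ₗ gz.{u}.toLinearMap := by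
  apply TensorProduct.ext'
  intro s t
  show rcol A (lcolLin (A ⊗[ℤ] (IZ.{u})ᵐᵒᵖ) (s ⊗ₜ[ℤ] ((1 : A) ⊗ₜ[ℤ] t))) = algebraMap ℤ A (gz.{u} (s ⊗ₜ[ℤ] t))
  simp [lcolLin_tmul, gz, mul_comm]
lemma P2_pairing :
    P2 A ∘ₗ cocyclePairing IZ.{u} A IZ.{u}
      = (LinearMap.mul' ℤ A) ∘ₗ TensorProduct.map
          ((opLinearEquiv ℤ).symm.toLinearMap ∘ₗ (lcol Aᵐᵒᵖ).toLinearMap)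
          (rcol A).toLinearMap := by
  apply TensorProduct.ext_fourfold'
  intro s a b t
  show rcol A (lcolLin (A ⊗[ℤ] (IZ.{u})ᵐᵒᵖ) (s ⊗ₜ[ℤ] ((unop a * b) ⊗ₜ[ℤ] t))) =
    unop (lcol Aᵐᵒᵖ (s ⊗ₜ[ℤ] a)) * rcol A (b ⊗ₜ[ℤ] t)
  simp [lcolLin_tmul, smul_tmul', smul_tmul, mul_smul, mul_smul_comm,
    smul_mul_assoc]
  have htu : (((unop t).down : ℤ) : A) * unop a = unop a * (((unop t).down : ℤ) : A) :=
    (Int.cast_commute _ _).eq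
  have hts : (((unop t).down : ℤ) : A) * ((s.down : ℤ) : A) =
      ((s.down : ℤ) : A) * (((unop t).down : ℤ) : A) := (Int.cast_commute _ _).eq
  calc (((unop t).down : ℤ) : A) * (((s.down : ℤ) : A) * (unop a * b))
      = ((((unop t).down : ℤ) : A) * ((s.down : ℤ) : A)) * (unop a * b) := by
        rw [mul_assoc]
    _ = (((s.down : ℤ) : A) * (((unop t).down : ℤ) : A)) * (unop a * b) := by rw [hts]
    _ = ((s.down : ℤ) : A) * (((((unop t).down : ℤ) : A) * unop a) * b) := by
        rw [mul_assoc, mul_assoc]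
    _ = ((s.down : ℤ) : A) * ((unop a * (((unop t).down : ℤ) : A)) * b) := by rw [htu]
    _ = ((s.down : ℤ) : A) * unop a * ((((unop t).down : ℤ) : A) * b) := by
        rw [mul_assoc (unop a), ← mul_assoc]
    _ = unop a * ((s.down : ℤ) : A) * ((((unop t).down : ℤ) : A) * b) := by
        rw [(Int.cast_commute (s.down : ℤ) (unop a)).eq]

lemma gz_left (x : IZ.{u} ⊗[ℤ] (IZ.{u})ᵐᵒᵖ) :
    eI.{u} (unop (lcol (IZ.{u})ᵐᵒᵖ x)) = gz.{u} x := by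
  have : (eI.{u}.toLinearMap ∘ₗ (opLinearEquiv ℤ).symm.toLinearMap ∘ₗ
      (lcol (IZ.{u})ᵐᵒᵖ).toLinearMap) = gz.{u}.toLinearMap := by
    apply TensorProduct.ext'
    intro s t
    simp [gz, mul_comm]
  exact LinearMap.congr_fun this x

lemma center_map {R S : Type*} [Ring R] [Ring S] (e : R ≃+* S) {x : R}
    (hx : x ∈ Subring.center R) : e x ∈ Subring.center S := by
  rw [Subring.mem_center_iff] at hx ⊢
  intro g
  rw [← e.apply_symm_apply g, ← map_mul, ← map_mul, hx]

lemma center_unop {R : Type*} [Ring R] {y : Rᵐᵒᵖ}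
    (hy : y ∈ Subring.center Rᵐᵒᵖ) : unop y ∈ Subring.center R := by
  rw [Subring.mem_center_iff] at hy ⊢
  intro g
  have := hy (op g)
  calc g * unop y = unop (y * op g) := by simp
    _ = unop (op g * y) := by rw [this]
    _ = unop y * g := by simp

end CocycleAux

open TensorProduct MulOpposite in
/-- Vanishing of `E₂^{1,1}` for the bicategory of rings and bimodules:
every cocycle `z` of central units of the rings `B ⊗[ℤ] Aᵐᵒᵖ` is a coboundary. -/
theorem cocycle_on_rings_is_coboundary
    (z : ∀ (A : Type u) [Ring A] (B : Type u) [Ring B],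
      (Subring.center (B ⊗[ℤ] Aᵐᵒᵖ))ˣ)
    (hz : ∀ (A : Type u) [Ring A] (B : Type u) [Ring B] (C : Type u) [Ring C],
      cocyclePairing A B C
          ((((z B C : Subring.center (C ⊗[ℤ] Bᵐᵒᵖ)) : C ⊗[ℤ] Bᵐᵒᵖ)) ⊗ₜ[ℤ]
            (((z A B : Subring.center (B ⊗[ℤ] Aᵐᵒᵖ)) : B ⊗[ℤ] Aᵐᵒᵖ))) =
        unitInsertion A B C
          (((z A C : Subring.center (C ⊗[ℤ] Aᵐᵒᵖ)) : C ⊗[ℤ] Aᵐᵒᵖ))) :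
    ∃ w : ∀ (A : Type u) [Ring A], (Subring.center A)ˣ,
      ∀ (A : Type u) [Ring A] (B : Type u) [Ring B],
        ((z A B : Subring.center (B ⊗[ℤ] Aᵐᵒᵖ)) : B ⊗[ℤ] Aᵐᵒᵖ) =
          ((((w B : Subring.center B) : B)) ⊗ₜ[ℤ] (1 : Aᵐᵒᵖ)) *
            ((1 : B) ⊗ₜ[ℤ] (MulOpposite.op ((((w A)⁻¹ : (Subring.center A)ˣ) : Subring.center A) : A))) := by
  classical
  -- notation for the underlying ring elements of the cocycle
  let Z : ∀ (A : Type u) [Ring A] (B : Type u) [Ring B], B ⊗[ℤ] Aᵐᵒᵖ :=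
    fun A _ B _ => ((z A B : Subring.center (B ⊗[ℤ] Aᵐᵒᵖ)) : B ⊗[ℤ] Aᵐᵒᵖ)
  -- the candidate coboundary data
  let wv : ∀ (A : Type u) [Ring A], A := fun A _ => rcol A (Z IZ.{u} A)
  let vv : ∀ (A : Type u) [Ring A], Aᵐᵒᵖ := fun A _ => lcol Aᵐᵒᵖ (Z A IZ.{u})
  -- the scalar c
  set c : ℤ := gz.{u} (Z IZ.{u} IZ.{u}) with hc
  -- main tensor identity: Z A B = wv B ⊗ vv A
  have key : ∀ (A : Type u) [Ring A] (B : Type u) [Ring B],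
      Z A B = (wv B) ⊗ₜ[ℤ] (vv A) := by
    intro A _ B _
    have h := congrArg (TensorProduct.map LinearMap.id (lcol Aᵐᵒᵖ).toLinearMap) (hz A IZ.{u} B)
    have h1 := LinearMap.congr_fun (P1_pairing A B) ((Z IZ.{u} B) ⊗ₜ[ℤ] (Z A IZ.{u}))
    have h2 := LinearMap.congr_fun (P1_insertion A B) (Z A B)
    replace h := h1.symm.trans (h.trans h2)
    change (rcol B (Z IZ.{u} B)) ⊗ₜ[ℤ] (lcol Aᵐᵒᵖ (Z A IZ.{u})) = Z A B at h
    exact h.symm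
  -- the relation unop (vv A) * wv A = c • 1
  have rel : ∀ (A : Type u) [Ring A], unop (vv A) * wv A = algebraMap ℤ A c := by
    intro A _
    have h := congrArg (P2 A) (hz IZ.{u} A IZ.{u})
    have h1 := LinearMap.congr_fun (P2_pairing A) ((Z A IZ.{u}) ⊗ₜ[ℤ] (Z IZ.{u} A))
    have h2 := LinearMap.congr_fun (P2_insertion A) (Z IZ.{u} IZ.{u})
    replace h := h1.symm.trans (h.trans h2)
    change unop (lcol Aᵐᵒᵖ (Z A IZ.{u})) * rcol A (Z IZ.{u} A) = algebraMap ℤ A (gz.{u} (Z IZ.{u} IZ.{u})) at h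
    simpa [TensorProduct.map_tmul, LinearMap.mul'_apply] using h
  -- c is idempotent
  have hcc : c * c = c := by
    have h := rel IZ.{u}
    have := congrArg eI.{u} h
    rw [map_mul] at this
    rw [gz_left] at this
    have h2 : eI.{u} (rcol IZ.{u} (Z IZ.{u} IZ.{u})) = c := rfl
    rw [h2] at this
    simpa [algebraMap_int_eq, eq_comm] using this
  -- c is a unit
  have hcu : IsUnit c := by
    have : IsUnit (Z IZ.{u} IZ.{u}) := by
      exact (Units.map (Subring.center _).subtype.toMonoidHom (z IZ.{u} IZ.{u})).isUnit
    exact this.map gz.{u}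
  have hc1 : c = 1 := by
    rcases Int.isUnit_iff.mp hcu with h | h
    · exact h
    · rw [h] at hcc; omega
  have rel1 : ∀ (A : Type u) [Ring A], unop (vv A) * wv A = 1 := by
    intro A _
    rw [rel A, hc1, map_one]
  -- centrality
  have hwc : ∀ (A : Type u) [Ring A], wv A ∈ Subring.center A := by
    intro A _
    exact center_map (rcol A).toRingEquiv (SetLike.coe_mem _)
  have hvc : ∀ (A : Type u) [Ring A], unop (vv A) ∈ Subring.center A := by
    intro A _
    exact center_unop (center_map (lcol Aᵐᵒᵖ).toRingEquiv (SetLike.coe_mem _))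
  have rel1' : ∀ (A : Type u) [Ring A], wv A * unop (vv A) = 1 := by
    intro A _
    rw [Subring.mem_center_iff.mp (hvc A) (wv A)]
    exact rel1 A
  -- build the units
  let W : ∀ (A : Type u) [Ring A], (Subring.center A)ˣ := fun A _ =>
    ⟨⟨wv A, hwc A⟩, ⟨unop (vv A), hvc A⟩, Subtype.ext (rel1' A), Subtype.ext (rel1 A)⟩
  refine ⟨W, ?_⟩
  intro A _ B _
  have h1 : (((W B : Subring.center B) : B)) = wv B := rfl
  have h2 : op ((((W A)⁻¹ : (Subring.center A)ˣ) : Subring.center A) : A) = vv A :=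
    op_unop (vv A)
  rw [h1, h2, Algebra.TensorProduct.tmul_mul_tmul, mul_one, one_mul]
  exact key A B
end

section
/- Fix a universe u containing the ring of integers (e.g. via ULift). Suppose that for every ring A in u a unit z(A) of the center of A is given, such that for all rings A, B in u the equality z(B) ⊗ 1 = 1 ⊗ op(z(A)) holds in the ring B ⊗[ℤ] Aᵐᵒᵖ. Then either z(A) = 1 for every ring A in u, or z(A) = −1 (the image of −1 ∈ ℤ in A) for every ring A in u. -/
open scoped TensorProduct

universe u

set_option synthInstance.maxHeartbeats 400000
set_option maxHeartbeats 1000000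

/-- If a family of central units `z(A)` of all rings `A` satisfies
`z(B) ⊗ 1 = 1 ⊗ op (z(A))` in `B ⊗[ℤ] Aᵐᵒᵖ` for all rings `A`, `B`, then the family is
constantly `1` or constantly `-1`. (The automorphism group of the tensor unit of the
Drinfeld center of the bicategory of rings and bimodules is cyclic of order 2.) -/
theorem central_units_family_eq_one_or_neg_one
    (z : ∀ (A : Type u) [Ring A], (Subring.center A)ˣ)
    (hz : ∀ (A : Type u) [Ring A] (B : Type u) [Ring B],
      ((((z B : Subring.center B) : B)) ⊗ₜ[ℤ] (1 : Aᵐᵒᵖ) : B ⊗[ℤ] Aᵐᵒᵖ) =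
        (1 : B) ⊗ₜ[ℤ] (MulOpposite.op ((z A : Subring.center A) : A))) :
    (∀ (A : Type u) [Ring A], ((z A : Subring.center A) : A) = 1) ∨
    (∀ (A : Type u) [Ring A], ((z A : Subring.center A) : A) = -1) := by
  set n : ℤ := (((z (ULift ℤ) : Subring.center (ULift ℤ)) : ULift ℤ)).down with hn
  have hunit : IsUnit n := by
    have h1 : IsUnit ((z (ULift ℤ) : Subring.center (ULift ℤ)) : ULift ℤ) :=
      (Units.isUnit (z (ULift ℤ))).map (Subring.center (ULift ℤ)).subtype
    exact h1.map (ULift.ringEquiv : ULift ℤ ≃+* ℤ)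
  have key : ∀ (A : Type u) [Ring A], ((z A : Subring.center A) : A) = (n : A) := by
    intro A _
    have h := hz A (ULift ℤ)
    let f : ULift.{u} ℤ ⊗[ℤ] Aᵐᵒᵖ →ₗ[ℤ] Aᵐᵒᵖ :=
      TensorProduct.lift ((LinearMap.lsmul ℤ Aᵐᵒᵖ).comp ULift.moduleEquiv.toLinearMap)
    have hf := congrArg f h
    erw [TensorProduct.lift.tmul, TensorProduct.lift.tmul] at hf
    simp only [f, TensorProduct.lift.tmul, LinearMap.comp_apply, LinearMap.lsmul_apply,
      LinearEquiv.coe_coe, ULift.moduleEquiv_apply, ULift.one_down, one_smul] at hf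
    have h2 : ((z A : Subring.center A) : A) = n • (1 : A) := by
      apply MulOpposite.op_injective
      rw [← hf]
      simp [MulOpposite.op_smul]
      rfl
    rw [h2, zsmul_eq_mul, mul_one]
  rcases Int.isUnit_iff.mp hunit with h1 | h1
  · left; intro A _; rw [key A, h1]; simp
  · right; intro A _; rw [key A, h1]; simp
end

section
/- Let G be a group, A a commutative group written multiplicatively, and ω : G → G → G → A a function satisfying the 3-cocycle identity (for the trivial G-action on A): ω(h,k,l) · ω(g, h·k, l) · ω(g,h,k) = ω(g·h, k, l) · ω(g, h, k·l) for all g, h, k, l ∈ G. Let z be an element of the center of G. Then the function γ : G → G → A defined by γ(g,h) = ω(g,h,z) · ω(g,z,h)⁻¹ · ω(z,g,h) satisfies the 2-cocycle identity (for the trivial action): γ(h,k) · γ(g, h·k) = γ(g·h, k) · γ(g,h) for all g, h, k ∈ G. -/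
private lemma aux_comb {A : Type*} [AddCommGroup A]
    (A1 A2 A3 A4 A5 B1 B2 B3 B4 C1 C3 C4 C5 D2 D3 D5 : A)
    (e1 : A1 + A2 + A3 = A4 + A5)
    (e2 : B1 + B2 + B3 = B4 + A5)
    (e3 : C1 + B2 + C3 = C4 + C5)
    (e4 : A3 + D2 + D3 = C4 + D5) :
    (A1 + -B1 + C1) + (A2 + -C5 + D5) = (A4 + -B4 + D2) + (B3 + -C3 + D3) := by
  have h1 : A4 = A1 + A2 + A3 - A5 := by rw [eq_sub_iff_add_eq]; exact e1.symm
  have h2 : B4 = B1 + B2 + B3 - A5 := by rw [eq_sub_iff_add_eq]; exact e2.symm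
  have h3 : C4 = C1 + B2 + C3 - C5 := by rw [eq_sub_iff_add_eq]; exact e3.symm
  have h5 : D5 = A3 + D2 + D3 - C4 := by rw [eq_sub_iff_add_eq, add_comm]; exact e4.symm
  subst h1 h2 h5 h3
  abel

/-- If `ω` is a 3-cocycle on a group `G` with values in a commutative group
`A` (trivial action) and `z` is central in `G`, then
`γ(g,h) = ω(g,h,z) · ω(g,z,h)⁻¹ · ω(z,g,h)` is a 2-cocycle. -/
theorem two_cocycle_from_three_cocycle_and_central_element
    {G A : Type*} [Group G] [CommGroup A] (ω : G → G → G → A)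
    (hω : ∀ g h k l : G,
      ω h k l * ω g (h * k) l * ω g h k = ω (g * h) k l * ω g h (k * l))
    (z : G) (hz : z ∈ Subgroup.center G) :
    ∀ g h k : G,
      (ω h k z * (ω h z k)⁻¹ * ω z h k) *
        (ω g (h * k) z * (ω g z (h * k))⁻¹ * ω z g (h * k)) =
      (ω (g * h) k z * (ω (g * h) z k)⁻¹ * ω z (g * h) k) *
        (ω g h z * (ω g z h)⁻¹ * ω z g h) := by
  intro g h k
  have hc : ∀ x : G, x * z = z * x := Subgroup.mem_center_iff.mp hz
  have e1 := hω g h k z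
  have e2 := hω g h z k
  have e3 := hω g z h k
  have e4 := hω z g h k
  rw [hc k] at e1
  rw [hc h] at e2
  rw [hc g] at e3
  apply Additive.ofMul.injective
  have e1' := congrArg Additive.ofMul e1
  have e2' := congrArg Additive.ofMul e2
  have e3' := congrArg Additive.ofMul e3
  have e4' := congrArg Additive.ofMul e4
  simp only [ofMul_mul, ofMul_inv] at e1' e2' e3' e4' ⊢
  exact aux_comb _ _ _ _ _ _ _ _ _ _ _ _ _ _ _ _ e1' e2' e3' e4'
end

section
/- Let n ≥ 2, let K be a field, and let ζ ∈ K be a primitive n-th root of unity. Let G = (ZMod n)³, define ω : G → G → G → Kˣ by ω(x,y,z) = ζ^(x₁·y₂·z₃) (exponents via natural-number representatives of the ZMod n coordinates), let e₁ = (1,0,0) ∈ G, and define γ : G → G → Kˣ by γ(x,y) = ω(x,y,e₁) · ω(x,e₁,y)⁻¹ · ω(e₁,x,y). Then γ is not a 2-coboundary: there is no function φ : G → Kˣ such that γ(x,y) = φ(x) · φ(y) · φ(x+y)⁻¹ for all x, y ∈ G. -/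
/-- For `n ≥ 2`, a field `K` with a primitive `n`-th root of unity `ζ`,
the deformation 3-cocycle `ω(x,y,z) = ζ ^ (x₁ · y₂ · z₃)` on `G = (ZMod n)³` and the
central element `e₁ = (1,0,0)`, the 2-cocycle
`γ(x,y) = ω(x,y,e₁) · ω(x,e₁,y)⁻¹ · ω(e₁,x,y)` is not a 2-coboundary. -/
theorem obstruction_two_cocycle_is_not_coboundary
    (n : ℕ) (hn : 2 ≤ n) (K : Type*) [Field K] (ζ : Kˣ)
    (hζ : IsPrimitiveRoot (ζ : K) n)
    (ω : (ZMod n × ZMod n × ZMod n) → (ZMod n × ZMod n × ZMod n) →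
      (ZMod n × ZMod n × ZMod n) → Kˣ)
    (hω : ∀ x y z, ω x y z = ζ ^ (x.1.val * y.2.1.val * z.2.2.val))
    (e₁ : ZMod n × ZMod n × ZMod n) (he₁ : e₁ = ((1 : ZMod n), (0 : ZMod n), (0 : ZMod n)))
    (γ : (ZMod n × ZMod n × ZMod n) → (ZMod n × ZMod n × ZMod n) → Kˣ)
    (hγ : ∀ x y, γ x y = ω x y e₁ * (ω x e₁ y)⁻¹ * ω e₁ x y) :
    ¬ ∃ φ : (ZMod n × ZMod n × ZMod n) → Kˣ,
      ∀ x y, γ x y = φ x * φ y * (φ (x + y))⁻¹ := by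
  rintro ⟨φ, h⟩
  haveI : Fact (1 < n) := ⟨by omega⟩
  have hne : (ζ : K) ≠ 1 := by
    intro h1
    have := hζ.pow_ne_one_of_pos_of_lt (l := 1) one_ne_zero (by omega)
    simp [h1] at this
  set a : ZMod n × ZMod n × ZMod n := (0, 1, 0) with ha
  set b : ZMod n × ZMod n × ZMod n := (0, 0, 1) with hb
  have hsym : γ a b = γ b a := by
    rw [h a b, h b a, add_comm, mul_comm (φ a) (φ b)]
  have hab : γ a b = ζ := by
    rw [hγ, hω, hω, hω, he₁, ha, hb]
    simp [ZMod.val_one, ZMod.val_zero]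
  have hba : γ b a = 1 := by
    rw [hγ, hω, hω, hω, he₁, ha, hb]
    simp [ZMod.val_one, ZMod.val_zero]
  rw [hab, hba] at hsym
  exact hne (by rw [hsym]; simp)
end

section
/- Let C be a monoidal category. Consider the group Z of natural automorphisms f of the identity functor of C satisfying f_{M⊗N} = f_M ⊗ f_N for all objects M, N (under composition), and its subgroup B of those f for which there exists an automorphism u of the tensor unit 𝟙_C with f_M = λ_M⁻¹ ≫ (u ▷ M) ≫ λ_M ≫ ρ_M⁻¹ ≫ (M ◁ u⁻¹) ≫ ρ_M for all M. Then the quotient group Z/B is isomorphic to the group of isomorphism classes of objects (P, p) of the Drinfeld center Center C whose underlying object P is isomorphic to 𝟙_C in C, with group operation induced by the tensor product of Center C. Explicitly, the isomorphism sends the class of f ∈ Z to the class of the central object (𝟙_C, p_f) whose half-braiding at M is obtained from f_M by composing with the unitor identifications 𝟙_C ⊗ M ≅ M ≅ M ⊗ 𝟙_C. -/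
open CategoryTheory MonoidalCategory

universe v u

namespace DrinfeldAux

variable {C : Type u} [Category.{v} C] [MonoidalCategory C]

lemma endo_comm (α β : 𝟭 C ⟶ 𝟭 C) (M : C) :
    α.app M ≫ β.app M = β.app M ≫ α.app M := by
  simpa using β.naturality (α.app M)

lemma unit_comm (a b : 𝟙_ C ⟶ 𝟙_ C) : a ≫ b = b ≫ a := by
  have key : ∀ x y : 𝟙_ C ⟶ 𝟙_ C,
      (ρ_ (𝟙_ C)).inv ≫ x ▷ 𝟙_ C ≫ 𝟙_ C ◁ y ≫ (λ_ (𝟙_ C)).hom = x ≫ y := by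
    intro x y
    rw [leftUnitor_naturality, unitors_equal, rightUnitor_naturality_assoc,
      Iso.inv_hom_id_assoc]
  have key2 : ∀ x y : 𝟙_ C ⟶ 𝟙_ C,
      (ρ_ (𝟙_ C)).inv ≫ 𝟙_ C ◁ y ≫ x ▷ 𝟙_ C ≫ (λ_ (𝟙_ C)).hom = y ≫ x := by
    intro x y
    rw [unitors_equal, rightUnitor_naturality, ← unitors_equal,
      leftUnitor_naturality_assoc, ← unitors_inv_equal, Iso.inv_hom_id_assoc]
  calc a ≫ b = (ρ_ (𝟙_ C)).inv ≫ a ▷ 𝟙_ C ≫ 𝟙_ C ◁ b ≫ (λ_ (𝟙_ C)).hom :=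
        (key a b).symm
    _ = (ρ_ (𝟙_ C)).inv ≫ 𝟙_ C ◁ b ≫ a ▷ 𝟙_ C ≫ (λ_ (𝟙_ C)).hom := by
        slice_lhs 2 3 => rw [← whisker_exchange]
        simp only [Category.assoc]
    _ = b ≫ a := key2 a b

/-- The natural endomorphism of the identity functor given by left unit action. -/
@[simps]
def Lnat (u : 𝟙_ C ⟶ 𝟙_ C) : 𝟭 C ⟶ 𝟭 C where
  app M := (λ_ M).inv ≫ u ▷ M ≫ (λ_ M).hom
  naturality M N h := by
    simp only [Functor.id_obj, Functor.id_map]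
    rw [leftUnitor_inv_naturality_assoc, whisker_exchange_assoc, leftUnitor_naturality]
    simp only [Category.assoc]

/-- The natural endomorphism of the identity functor given by right unit action. -/
@[simps]
def Rnat (u : 𝟙_ C ⟶ 𝟙_ C) : 𝟭 C ⟶ 𝟭 C where
  app M := (ρ_ M).inv ≫ M ◁ u ≫ (ρ_ M).hom
  naturality M N h := by
    simp only [Functor.id_obj, Functor.id_map]
    rw [rightUnitor_inv_naturality_assoc, ← whisker_exchange_assoc, rightUnitor_naturality]
    simp only [Category.assoc]

/-- The inner automorphism of the identity functor induced by `u : Aut (𝟙_ C)`. -/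
def phi (u : Aut (𝟙_ C)) (M : C) : M ⟶ M :=
  (λ_ M).inv ≫ (u.hom ▷ M) ≫ (λ_ M).hom ≫ (ρ_ M).inv ≫ (M ◁ u.inv) ≫ (ρ_ M).hom

lemma phi_eq (u : Aut (𝟙_ C)) (M : C) :
    phi u M = (Lnat u.hom).app M ≫ (Rnat u.inv).app M := by
  simp [phi, Lnat, Rnat]

lemma L_mul (a b : 𝟙_ C ⟶ 𝟙_ C) (M : C) :
    (Lnat a).app M ≫ (Lnat b).app M = (Lnat (a ≫ b)).app M := by
  simp [Lnat]

lemma R_mul (a b : 𝟙_ C ⟶ 𝟙_ C) (M : C) :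
    (Rnat a).app M ≫ (Rnat b).app M = (Rnat (a ≫ b)).app M := by
  simp [Rnat, MonoidalCategory.whiskerLeft_comp]

lemma mul_hom' (u w : Aut (𝟙_ C)) : (u * w).hom = u.hom ≫ w.hom :=
  unit_comm w.hom u.hom

lemma mul_inv' (u w : Aut (𝟙_ C)) : (u * w).inv = u.inv ≫ w.inv := rfl

lemma phi_mul (u w : Aut (𝟙_ C)) (M : C) :
    phi u M ≫ phi w M = phi (u * w) M := by
  rw [phi_eq, phi_eq, phi_eq, mul_hom', mul_inv', ← L_mul, ← R_mul]
  simp only [Category.assoc]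
  slice_lhs 2 3 => rw [endo_comm (Rnat u.inv) (Lnat w.hom)]
  simp only [Category.assoc]

lemma phi_one (M : C) : phi (1 : Aut (𝟙_ C)) M = 𝟙 M := by
  simp [phi, (show (1 : Aut (𝟙_ C)) = Iso.refl _ from rfl)]

lemma phi_inv_cancel (u : Aut (𝟙_ C)) (M : C) :
    phi u M ≫ phi u⁻¹ M = 𝟙 M := by
  rw [phi_mul, mul_inv_cancel, phi_one]

/-- The half-braiding on the unit object associated to a tensor-compatible natural
automorphism of the identity functor. -/
def bF (f : Aut (𝟭 C))
    (hf : ∀ M N : C, f.hom.app (M ⊗ N) = f.hom.app M ⊗ₘ f.hom.app N) :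
    HalfBraiding (𝟙_ C) where
  β M :=
    { hom := (λ_ M).hom ≫ f.hom.app M ≫ (ρ_ M).inv
      inv := (ρ_ M).hom ≫ f.inv.app M ≫ (λ_ M).inv
      hom_inv_id := by simp [Iso.hom_inv_id_app_assoc (f : 𝟭 C ≅ 𝟭 C) M]
      inv_hom_id := by simp [Iso.inv_hom_id_app_assoc (f : 𝟭 C ≅ 𝟭 C) M] }
  monoidal U U' := by
    dsimp only
    rw [hf U U', MonoidalCategory.tensorHom_def]
    monoidal
  naturality {U U'} g := by
    dsimp only
    rw [leftUnitor_naturality_assoc]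
    have hn : g ≫ f.hom.app U' = f.hom.app U ≫ g := by
      simpa using f.hom.naturality g
    rw [← Category.assoc g, hn]
    simp only [Category.assoc]
    rw [rightUnitor_inv_naturality g]


lemma comm_forward (f g : Aut (𝟭 C)) (u : Aut (𝟙_ C))
    (h : ∀ M : C, g.hom.app M = phi u M ≫ f.hom.app M) (M : C) :
    u.inv ▷ M ≫ ((λ_ M).hom ≫ g.hom.app M ≫ (ρ_ M).inv) =
      ((λ_ M).hom ≫ f.hom.app M ≫ (ρ_ M).inv) ≫ M ◁ u.inv := by
  have hc := endo_comm (Rnat u.inv) f.hom M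
  simp only [Rnat_app, Category.assoc] at hc
  rw [h M, phi]
  simp only [Category.assoc, Iso.hom_inv_id_assoc]
  rw [← comp_whiskerRight_assoc, show u.inv ≫ u.hom = 𝟙 _ from u.inv_hom_id, id_whiskerRight, Category.id_comp]
  slice_lhs 2 5 => rw [hc]
  simp

lemma comm_backward (f g : Aut (𝟭 C)) (vh vi : 𝟙_ C ⟶ 𝟙_ C)
    (hv : vh ≫ vi = 𝟙 _) (hv' : vi ≫ vh = 𝟙 _)
    (hcomm : ∀ M : C, vh ▷ M ≫ ((λ_ M).hom ≫ g.hom.app M ≫ (ρ_ M).inv) =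
      ((λ_ M).hom ≫ f.hom.app M ≫ (ρ_ M).inv) ≫ M ◁ vh) (M : C) :
    g.hom.app M ≫ f.inv.app M = phi ⟨vi, vh, hv', hv⟩ M := by
  have hc := endo_comm (Rnat vh) f.hom M
  simp only [Rnat_app, Category.assoc] at hc
  have hcomm' := hcomm M
  simp only [Category.assoc] at hcomm'
  have key : phi ⟨vi, vh, hv', hv⟩ M ≫ f.hom.app M = g.hom.app M := by
    unfold phi
    dsimp only
    simp only [Category.assoc]
    slice_lhs 4 7 => rw [hc]
    slice_lhs 3 6 => rw [← hcomm']
    simp only [Category.assoc]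
    rw [← comp_whiskerRight_assoc, hv', id_whiskerRight, Category.id_comp]
    simp
  rw [← key]
  simp [Iso.hom_inv_id_app (f : 𝟭 C ≅ 𝟭 C) M]

lemma mkUnit_tensor_comm (f g : Aut (𝟭 C)) (U : C) :
    (λ_ (𝟙_ C)).inv ▷ U ≫ (α_ (𝟙_ C) (𝟙_ C) U).hom ≫
        (𝟙_ C ◁ ((λ_ U).hom ≫ g.hom.app U ≫ (ρ_ U).inv)) ≫
        (α_ (𝟙_ C) U (𝟙_ C)).inv ≫
        (((λ_ U).hom ≫ f.hom.app U ≫ (ρ_ U).inv) ▷ 𝟙_ C) ≫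
        (α_ U (𝟙_ C) (𝟙_ C)).hom =
      ((λ_ U).hom ≫ (g.hom.app U ≫ f.hom.app U) ≫ (ρ_ U).inv) ≫
        U ◁ (λ_ (𝟙_ C)).inv := by
  monoidal

/-- The component isomorphisms of the automorphism of the identity obtained from a central
object with underlying object isomorphic to the unit. -/
def surjIso (X : Center C) (e : X.1 ≅ 𝟙_ C) (M : C) : (𝟭 C).obj M ≅ (𝟭 C).obj M where
  hom := (λ_ M).inv ≫ e.inv ▷ M ≫ (X.2.β M).hom ≫ M ◁ e.hom ≫ (ρ_ M).hom
  inv := (ρ_ M).inv ≫ M ◁ e.inv ≫ (X.2.β M).inv ≫ e.hom ▷ M ≫ (λ_ M).hom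
  hom_inv_id := by
    simp [← MonoidalCategory.whiskerLeft_comp_assoc, ← comp_whiskerRight_assoc]
  inv_hom_id := by
    simp [← MonoidalCategory.whiskerLeft_comp_assoc, ← comp_whiskerRight_assoc]

/-- The automorphism of the identity functor obtained from a central object with
underlying object isomorphic to the unit. -/
def surjAut (X : Center C) (e : X.1 ≅ 𝟙_ C) : Aut (𝟭 C) :=
  NatIso.ofComponents (surjIso X e) (by
    intro M N h
    dsimp [surjIso]
    rw [leftUnitor_inv_naturality_assoc, whisker_exchange_assoc,
      HalfBraiding.naturality_assoc, ← whisker_exchange_assoc, rightUnitor_naturality]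
    simp only [Category.assoc])

lemma surjAut_tensor (X : Center C) (e : X.1 ≅ 𝟙_ C) (M N : C) :
    (surjAut X e).hom.app (M ⊗ N) =
      (surjAut X e).hom.app M ⊗ₘ (surjAut X e).hom.app N := by
  show (surjIso X e (M ⊗ N)).hom = (surjIso X e M).hom ⊗ₘ (surjIso X e N).hom
  dsimp [surjIso]
  rw [HalfBraiding.monoidal]
  calc (λ_ (M ⊗ N)).inv ≫ e.inv ▷ (M ⊗ N) ≫
        ((α_ X.1 M N).inv ≫ (X.2.β M).hom ▷ N ≫ (α_ M X.1 N).hom ≫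
          M ◁ (X.2.β N).hom ≫ (α_ M N X.1).inv) ≫ (M ⊗ N) ◁ e.hom ≫ (ρ_ (M ⊗ N)).hom
      = 𝟙 _ ⊗≫ e.inv ▷ M ▷ N ⊗≫ (X.2.β M).hom ▷ N ⊗≫
          ((M ◁ (e.hom ≫ e.inv)) ▷ N) ⊗≫ M ◁ (X.2.β N).hom ⊗≫ M ◁ N ◁ e.hom ⊗≫ 𝟙 _ := by
        rw [Iso.hom_inv_id, MonoidalCategory.whiskerLeft_id, id_whiskerRight]
        monoidal
    _ = ((λ_ M).inv ≫ e.inv ▷ M ≫ (X.2.β M).hom ≫ M ◁ e.hom ≫ (ρ_ M).hom) ⊗ₘ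
          ((λ_ N).inv ≫ e.inv ▷ N ≫ (X.2.β N).hom ≫ N ◁ e.hom ≫ (ρ_ N).hom) := by
        rw [MonoidalCategory.tensorHom_def, MonoidalCategory.whiskerLeft_comp]
        monoidal


variable (C)

/-- The group of tensor-compatible natural automorphisms of the identity functor. -/
def Zgrp : Subgroup (Aut (𝟭 C)) where
  carrier := {f | ∀ M N : C, f.hom.app (M ⊗ N) = f.hom.app M ⊗ₘ f.hom.app N}
  one_mem' := by
    intro M N
    show 𝟙 (M ⊗ N) = 𝟙 M ⊗ₘ 𝟙 N
    rw [id_tensorHom_id]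
  mul_mem' := by
    intro a b ha hb M N
    show b.hom.app (M ⊗ N) ≫ a.hom.app (M ⊗ N) =
      (b.hom.app M ≫ a.hom.app M) ⊗ₘ (b.hom.app N ≫ a.hom.app N)
    rw [ha M N, hb M N, tensorHom_comp_tensorHom]
  inv_mem' := by
    intro a ha M N
    show a.inv.app (M ⊗ N) = a.inv.app M ⊗ₘ a.inv.app N
    have h : a.hom.app (M ⊗ N) ≫ (a.inv.app M ⊗ₘ a.inv.app N) = 𝟙 _ := by
      rw [ha M N, tensorHom_comp_tensorHom]; simp [Iso.hom_inv_id_app (a : 𝟭 C ≅ 𝟭 C)]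
    calc a.inv.app (M ⊗ N)
        = a.inv.app (M ⊗ N) ≫ a.hom.app (M ⊗ N) ≫ (a.inv.app M ⊗ₘ a.inv.app N) := by
          rw [h, Category.comp_id]
      _ = a.inv.app M ⊗ₘ a.inv.app N := Iso.inv_hom_id_app_assoc (a : 𝟭 C ≅ 𝟭 C) (M ⊗ N) _

/-- The subgroup of inner (unitor-conjugation) automorphisms. -/
def Bgrp : Subgroup (Zgrp C) where
  carrier := {f | ∃ u : Aut (𝟙_ C), ∀ M : C, (f : Aut (𝟭 C)).hom.app M = phi u M}
  one_mem' := ⟨1, fun M => by rw [phi_one]; rfl⟩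
  mul_mem' := by
    rintro a b ⟨u, hu⟩ ⟨w, hw⟩
    refine ⟨w * u, fun M => ?_⟩
    show b.1.hom.app M ≫ a.1.hom.app M = phi (w * u) M
    rw [hu M, hw M]
    exact phi_mul w u M
  inv_mem' := by
    rintro a ⟨u, hu⟩
    refine ⟨u⁻¹, fun M => ?_⟩
    show a.1.inv.app M = phi u⁻¹ M
    have h2 : a.1.hom.app M ≫ phi u⁻¹ M = 𝟙 _ := by rw [hu M]; exact phi_inv_cancel u M
    calc a.1.inv.app M = a.1.inv.app M ≫ a.1.hom.app M ≫ phi u⁻¹ M := by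
          rw [h2, Category.comp_id]
      _ = phi u⁻¹ M := Iso.inv_hom_id_app_assoc (a.1 : 𝟭 C ≅ 𝟭 C) M _

end DrinfeldAux

open DrinfeldAux

/-- The object of the Drinfeld center with underlying object the tensor unit and a given
half-braiding. -/
def Center.mkUnit (C : Type u) [Category.{v} C] [MonoidalCategory C]
    (b : HalfBraiding (𝟙_ C)) : Center C := ⟨𝟙_ C, b⟩

/-- For a monoidal category `C`, let `Z` be the group of natural
automorphisms `f` of the identity functor with `f_{M ⊗ N} = f_M ⊗ f_N`, and `B ≤ Z` the
subgroup of those `f` of the form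
`f_M = λ_M⁻¹ ≫ (u ▷ M) ≫ λ_M ≫ ρ_M⁻¹ ≫ (M ◁ u⁻¹) ≫ ρ_M` for an automorphism `u` of
`𝟙_ C`. Then `f ↦ (𝟙_ C, p_f)`, where the half-braiding `p_f` at `M` is `f_M` composed
with the unitor identifications, induces a group isomorphism from `Z/B` onto the group of
isomorphism classes of objects of the Drinfeld center `Center C` whose underlying object
is isomorphic to `𝟙_ C`, with the operation induced by the tensor product of `Center C`:
it identifies iso-classes exactly according to the cosets of `B`, hits every iso-class
with underlying object isomorphic to `𝟙_ C`, and is multiplicative up to isomorphism. -/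
theorem quotient_iso_kernel_of_characteristic_homomorphism
    (C : Type u) [Category.{v} C] [MonoidalCategory C] :
    ∃ Zs : Subgroup (Aut (𝟭 C)),
      (∀ f : Aut (𝟭 C), f ∈ Zs ↔
        ∀ M N : C, f.hom.app (M ⊗ N) = f.hom.app M ⊗ₘ f.hom.app N) ∧
      ∃ Bs : Subgroup Zs,
        (∀ f : Zs, f ∈ Bs ↔ ∃ u : Aut (𝟙_ C), ∀ M : C,
          (f : Aut (𝟭 C)).hom.app M =
            (λ_ M).inv ≫ (u.hom ▷ M) ≫ (λ_ M).hom ≫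
              (ρ_ M).inv ≫ (M ◁ u.inv) ≫ (ρ_ M).hom) ∧
        ∃ b : Zs → HalfBraiding (𝟙_ C),
          (∀ (f : Zs) (M : C), ((b f).β M).hom =
            (λ_ M).hom ≫ (f : Aut (𝟭 C)).hom.app M ≫ (ρ_ M).inv) ∧
          (∀ f g : Zs, f⁻¹ * g ∈ Bs ↔
            Nonempty (Center.mkUnit C (b f) ≅ Center.mkUnit C (b g))) ∧
          (∀ X : Center C, Nonempty (X.1 ≅ 𝟙_ C) →
            ∃ f : Zs, Nonempty (Center.mkUnit C (b f) ≅ X)) ∧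
          (∀ f g : Zs, Nonempty (Center.mkUnit C (b (f * g)) ≅
            Center.mkUnit C (b f) ⊗ Center.mkUnit C (b g))) := by
  refine ⟨Zgrp C, fun f => Iff.rfl, Bgrp C, fun f => Iff.rfl,
    fun f => bF f.1 f.2, fun f M => rfl, ?_, ?_, ?_⟩
  · -- the iff with cosets of B
    intro f g
    constructor
    · rintro ⟨u, hu⟩
      have hu' : ∀ M : C, g.1.hom.app M ≫ f.1.inv.app M = phi u M := hu
      have h : ∀ M : C, g.1.hom.app M = phi u M ≫ f.1.hom.app M := by
        intro M
        rw [← hu' M]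
        simp [Iso.inv_hom_id_app (f.1 : 𝟭 C ≅ 𝟭 C) M]
      haveI : IsIso u.inv := ⟨u.hom, u.inv_hom_id, u.hom_inv_id⟩
      exact ⟨@Center.isoMk _ _ _ _ _ ⟨u.inv, fun M => comm_forward f.1 g.1 u h M⟩ this⟩
    · rintro ⟨e⟩
      have hv : e.hom.f ≫ e.inv.f = 𝟙 (𝟙_ C) := by
        rw [← Center.comp_f, e.hom_inv_id]; rfl
      have hv' : e.inv.f ≫ e.hom.f = 𝟙 (𝟙_ C) := by
        rw [← Center.comp_f, e.inv_hom_id]; rfl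
      exact ⟨⟨e.inv.f, e.hom.f, hv', hv⟩,
        fun M => comm_backward f.1 g.1 e.hom.f e.inv.f hv hv'
          (fun M => e.hom.comm M) M⟩
  · -- surjectivity
    intro X h
    obtain ⟨e⟩ := h
    haveI : IsIso e.inv := ⟨e.hom, e.inv_hom_id, e.hom_inv_id⟩
    refine ⟨⟨surjAut X e, fun M N => surjAut_tensor X e M N⟩,
      ⟨@Center.isoMk _ _ _ _ _ ⟨e.inv, fun M => ?_⟩ this⟩⟩
    show e.inv ▷ M ≫ (X.2.β M).hom =
      ((λ_ M).hom ≫ ((λ_ M).inv ≫ e.inv ▷ M ≫ (X.2.β M).hom ≫ M ◁ e.hom ≫ (ρ_ M).hom) ≫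
        (ρ_ M).inv) ≫ M ◁ e.inv
    simp [← MonoidalCategory.whiskerLeft_comp]
  · -- multiplicativity
    intro f g
    haveI : IsIso (λ_ (𝟙_ C)).inv :=
      ⟨(λ_ (𝟙_ C)).hom, (λ_ (𝟙_ C)).inv_hom_id, (λ_ (𝟙_ C)).hom_inv_id⟩
    exact ⟨@Center.isoMk _ _ _ _ _ ⟨(λ_ (𝟙_ C)).inv, fun U => mkUnit_tensor_comm f.1 g.1 U⟩ this⟩
end
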